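/- arXiv:1612.03071 — 2 statements merged into one kernel-verified Lean document; each statement's English description precedes it below -/
import Mathlib

section
/- With the cyclic-prefix OFDM block construction and the Alamouti relation c₁(p) = (c₀(p))* for all p, the half-block-shifted sequences satisfy: g̃₀(n + N/2) = (g̃₁(mod(-(n-ν), N) + ν + N/2))* for n = 0, 1, ..., ν, where N is even, g̃ᵤ is the cyclic-prefixed IDFT of cᵤ, and indices are taken within valid block ranges. -/
open Complex Real

/-- Property (3b) of Proposition 1 (τ = N/2): with the Alamouti relation
`c₁ = conj c₀`, the half-block-shifted cyclic-prefixed blocks satisfy the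
conjugate reversal identity for n = 0,…,ν. -/
theorem cyclic_prefix_half_shift_conj (N ν : ℕ) (hNeven : Even N) (hN : 1 ≤ N)
    (hν : ν ≤ N / 2)
    (c₀ c₁ : Fin N → ℂ) (hAL : ∀ p, c₁ p = (starRingEnd ℂ) (c₀ p))
    (g₀ g₁ gt₀ gt₁ : ℤ → ℂ)
    (hg₀ : ∀ m : ℤ, g₀ m = (1 / Real.sqrt N) *
      ∑ p : Fin N, c₀ p * Complex.exp (2 * Real.pi * Complex.I * p * m / N))
    (hg₁ : ∀ m : ℤ, g₁ m = (1 / Real.sqrt N) *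
      ∑ p : Fin N, c₁ p * Complex.exp (2 * Real.pi * Complex.I * p * m / N))
    (hgt₀ : ∀ n : ℤ, gt₀ n = g₀ ((n - (ν : ℤ)) % (N : ℤ)))
    (hgt₁ : ∀ n : ℤ, gt₁ n = g₁ ((n - (ν : ℤ)) % (N : ℤ))) :
    ∀ n : ℤ, 0 ≤ n → n ≤ (ν : ℤ) →
      gt₀ (n + (N : ℤ) / 2) =
        (starRingEnd ℂ) (gt₁ ((-(n - (ν : ℤ))) % (N : ℤ) + ν + (N : ℤ) / 2)) := by
  intro n hn hn'
  obtain ⟨t, ht⟩ := hNeven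
  have hNt : (N : ℤ) = t + t := by exact_mod_cast ht
  have hN2 : (N : ℤ) / 2 = t := by omega
  have hNne : (N : ℂ) ≠ 0 := by
    exact_mod_cast Nat.cast_ne_zero.mpr (by omega)
  rw [hgt₀, hgt₁, hg₀, hg₁]
  set M0 : ℤ := (n + (N : ℤ) / 2 - (ν : ℤ)) % (N : ℤ) with hM0
  set a : ℤ := (-(n - (ν : ℤ))) % (N : ℤ) + (ν : ℤ) + (N : ℤ) / 2 with ha
  set M1 : ℤ := (a - (ν : ℤ)) % (N : ℤ) with hM1
  have key : M0 + M1 = (N : ℤ) * (1 - (n + (N : ℤ) / 2 - (ν : ℤ)) / N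
      - (a - (ν : ℤ)) / N - (-(n - (ν : ℤ))) / N) := by
    have e0 : M0 = (n + (N : ℤ) / 2 - ν) - N * ((n + (N : ℤ) / 2 - ν) / N) :=
      Int.emod_def _ _
    have e1 : M1 = (a - (ν : ℤ)) - N * ((a - (ν : ℤ)) / N) := Int.emod_def _ _
    have e2 : (-(n - (ν : ℤ))) % N = (-(n - (ν : ℤ))) - N * ((-(n - (ν : ℤ))) / N) :=
      Int.emod_def _ _
    rw [e0, e1, ha, e2, hN2, hNt]
    ring
  set k : ℤ := 1 - (n + (N : ℤ) / 2 - (ν : ℤ)) / N - (a - (ν : ℤ)) / N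
      - (-(n - (ν : ℤ))) / N with hk
  rw [map_mul, map_sum]
  congr 1
  · simp [Complex.conj_ofReal, map_div₀]
  refine Finset.sum_congr rfl fun p _ => ?_
  rw [map_mul, hAL, RingHomCompTriple.comp_apply, ← Complex.exp_conj]
  congr 1
  have hc : (starRingEnd ℂ) (2 * Real.pi * Complex.I * p * M1 / N)
      = -(2 * Real.pi * Complex.I * p * M1 / N) := by
    simp [map_div₀, map_mul, Complex.conj_ofReal, Complex.conj_I, map_ofNat]
    ring
  rw [hc, Complex.exp_eq_exp_iff_exists_int]
  refine ⟨p * k, ?_⟩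
  have key2 : (M0 : ℂ) + M1 = (N : ℂ) * k := by exact_mod_cast congrArg (Int.cast : ℤ → ℂ) key
  push_cast
  field_simp
  linear_combination ((p : ℕ) : ℂ) * key2
end

section
/- Let c₀, c₁ : Fin N → ℂ be sequences of independent zero-mean symbols with E[cᵤ(p) cᵥ(q)*] = σ² δ_{uv} δ_{pq} and E[cᵤ(p) cᵥ(q)] = 0. Define g̃ᵤ(n) = (1/√N) Σ_p cᵤ(p) e^{2πi p (n-ν)/N} for n = 0,...,N+ν-1. Then Σ_{n=0}^{N+ν-1} E[g̃₀(n) · conj(g̃₁(n))] = 0, while if instead c₁ = conj(c₀), then Σ_{n=0}^{N+ν-1} E[g̃₀(n) · g̃₁(mod(-(n-ν),N)+ν)] = (N+ν) σ². -/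
open Complex Real

private lemma exp_pair (N : ℕ) (hN : 1 ≤ N) (p : ℕ) (t s : ℤ)
    (hts : s = (-t) % (N:ℤ)) (a b : ℂ) (ha : a = t) (hb : b = s) :
    Complex.exp (2 * Real.pi * Complex.I * p * a / N) *
    Complex.exp (2 * Real.pi * Complex.I * p * b / N) = 1 := by
  subst ha hb
  rw [← Complex.exp_add]
  have hNz : (N : ℂ) ≠ 0 := by exact_mod_cast Nat.cast_ne_zero.mpr (by omega)
  set m : ℤ := -((-t) / N) with hm_def
  have hm : t + s = N * m := by
    have := Int.emod_add_mul_ediv (-t) N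
    simp only [hm_def, hts]; linarith
  have hm' : (t : ℂ) + (s : ℂ) = (N:ℂ) * m := by exact_mod_cast congrArg (Int.cast : ℤ → ℂ) hm
  have : 2 * (Real.pi:ℂ) * Complex.I * p * t / N + 2 * Real.pi * Complex.I * p * s / N
      = (p * m : ℤ) * (2 * Real.pi * Complex.I) := by
    field_simp
    push_cast
    linear_combination (p:ℂ) * hm'
  rw [this, Complex.exp_int_mul_two_pi_mul_I]

private lemma rsq (N : ℕ) (hN : 1 ≤ N) :
    (1 / ((Real.sqrt N : ℝ) : ℂ)) * (1 / ((Real.sqrt N : ℝ) : ℂ)) = 1 / (N : ℂ) := by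
  have h : (Real.sqrt N) * (Real.sqrt N) = (N : ℝ) := Real.mul_self_sqrt (Nat.cast_nonneg N)
  rw [div_mul_div_comm, one_mul, ← Complex.ofReal_mul, h]
  push_cast
  ring

private lemma expand_mul (N : ℕ) (r s : ℂ) (a b : Fin N → ℂ) :
    (r * ∑ p : Fin N, a p) * (s * ∑ q : Fin N, b q)
      = ∑ p : Fin N, ∑ q : Fin N, (r * s) * (a p * b q) := by
  rw [mul_mul_mul_comm, Finset.sum_mul_sum, Finset.mul_sum]
  exact Finset.sum_congr rfl fun p _ => by rw [Finset.mul_sum]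

/-- Cross-correlation of OFDM blocks: for independent (spatial-multiplexing)
streams the total cross-correlation vanishes, whereas for Alamouti-conjugated
streams the reversed cross-correlation at lag τ = 0 equals (N+ν)σ². -/
theorem ofdm_cross_correlation (N ν : ℕ) (hN : 1 ≤ N) (hν : ν ≤ N)
    (Ω : Type*) (E : (Ω → ℂ) →ₗ[ℂ] ℂ) (σ2 : ℝ) (hσ : 0 < σ2)
    (c : Fin 2 → Fin N → Ω → ℂ) (gt : Fin 2 → ℤ → Ω → ℂ)
    (hgt : ∀ u (n : ℤ) ω, gt u n ω = (1 / Real.sqrt N) *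
      ∑ p : Fin N, c u p ω *
        Complex.exp (2 * Real.pi * Complex.I * p * (n - (ν : ℤ)) / N)) :
    ((∀ u v (p q : Fin N),
        E (fun ω => c u p ω * (starRingEnd ℂ) (c v q ω)) =
          if u = v ∧ p = q then (σ2 : ℂ) else 0) →
      (∀ u v (p q : Fin N), E (fun ω => c u p ω * c v q ω) = 0) →
      ∑ n ∈ Finset.range (N + ν),
        E (fun ω => gt 0 n ω * (starRingEnd ℂ) (gt 1 n ω)) = 0) ∧
    ((∀ p q : Fin N,
        E (fun ω => c 0 p ω * (starRingEnd ℂ) (c 0 q ω)) =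
          if p = q then (σ2 : ℂ) else 0) →
      (∀ p ω, c 1 p ω = (starRingEnd ℂ) (c 0 p ω)) →
      ∑ n ∈ Finset.range (N + ν),
        E (fun ω => gt 0 n ω *
          gt 1 ((-((n : ℤ) - (ν : ℤ))) % (N : ℤ) + (ν : ℤ)) ω) =
        ((N : ℂ) + (ν : ℂ)) * (σ2 : ℂ)) := by
  constructor
  · intro h1 _h2
    refine Finset.sum_eq_zero fun n _ => ?_
    have hfun : (fun ω => gt 0 n ω * (starRingEnd ℂ) (gt 1 n ω)) =
        ∑ p : Fin N, ∑ q : Fin N,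
          (((1 / ((Real.sqrt N : ℝ) : ℂ)) * (starRingEnd ℂ) (1 / ((Real.sqrt N : ℝ) : ℂ))) *
            ((Complex.exp (2 * Real.pi * Complex.I * p * ((n:ℤ) - (ν : ℤ)) / N) *
             (starRingEnd ℂ) (Complex.exp (2 * Real.pi * Complex.I * q * ((n:ℤ) - (ν : ℤ)) / N))))) •
          (fun ω => c 0 p ω * (starRingEnd ℂ) (c 1 q ω)) := by
      funext ω
      simp only [Finset.sum_apply, Pi.smul_apply, smul_eq_mul, hgt, map_mul, map_sum]
      rw [expand_mul]
      exact Finset.sum_congr rfl fun p _ => Finset.sum_congr rfl fun q _ => by ring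
    rw [hfun, map_sum]
    refine Finset.sum_eq_zero fun p _ => ?_
    rw [map_sum]
    refine Finset.sum_eq_zero fun q _ => ?_
    rw [map_smul, smul_eq_mul, h1 0 1 p q,
      if_neg (fun hc => absurd hc.1 (by decide)), mul_zero]
  · intro h hc1
    have key : ∀ n ∈ Finset.range (N + ν),
        E (fun ω => gt 0 n ω *
          gt 1 ((-((n : ℤ) - (ν : ℤ))) % (N : ℤ) + (ν : ℤ)) ω) = (σ2 : ℂ) := by
      intro n _
      obtain ⟨s, hs⟩ : ∃ s : ℤ, s = (-((n:ℤ) - (ν:ℤ))) % (N:ℤ) := ⟨_, rfl⟩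
      set m : ℤ := (-((n : ℤ) - (ν : ℤ))) % (N : ℤ) + (ν : ℤ) with hm
      have hfun : (fun ω => gt 0 n ω * gt 1 m ω) =
          ∑ p : Fin N, ∑ q : Fin N,
            (((1 / ((Real.sqrt N : ℝ) : ℂ)) * (1 / ((Real.sqrt N : ℝ) : ℂ))) *
              (Complex.exp (2 * Real.pi * Complex.I * p * ((n:ℤ) - (ν : ℤ)) / N) *
               Complex.exp (2 * Real.pi * Complex.I * q * ((m:ℤ) - (ν : ℤ)) / N))) •
            (fun ω => c 0 p ω * (starRingEnd ℂ) (c 0 q ω)) := by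
        funext ω
        simp only [Finset.sum_apply, Pi.smul_apply, smul_eq_mul, hgt, hc1]
        rw [expand_mul]
        exact Finset.sum_congr rfl fun p _ => Finset.sum_congr rfl fun q _ => by ring
      rw [hfun, map_sum]
      have hstep : ∀ p : Fin N,
          (∑ q : Fin N, E ((((1 / ((Real.sqrt N : ℝ) : ℂ)) * (1 / ((Real.sqrt N : ℝ) : ℂ))) *
              (Complex.exp (2 * Real.pi * Complex.I * p * ((n:ℤ) - (ν : ℤ)) / N) *
               Complex.exp (2 * Real.pi * Complex.I * q * ((m:ℤ) - (ν : ℤ)) / N))) •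
            (fun ω => c 0 p ω * (starRingEnd ℂ) (c 0 q ω)))) = (1 / (N:ℂ)) * (σ2:ℂ) := by
        intro p
        have hq : ∀ q : Fin N, E ((((1 / ((Real.sqrt N : ℝ) : ℂ)) * (1 / ((Real.sqrt N : ℝ) : ℂ))) *
              (Complex.exp (2 * Real.pi * Complex.I * p * ((n:ℤ) - (ν : ℤ)) / N) *
               Complex.exp (2 * Real.pi * Complex.I * q * ((m:ℤ) - (ν : ℤ)) / N))) •
            (fun ω => c 0 p ω * (starRingEnd ℂ) (c 0 q ω))) =
            if p = q then (((1 / ((Real.sqrt N : ℝ) : ℂ)) * (1 / ((Real.sqrt N : ℝ) : ℂ))) *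
              (Complex.exp (2 * Real.pi * Complex.I * p * ((n:ℤ) - (ν : ℤ)) / N) *
               Complex.exp (2 * Real.pi * Complex.I * q * ((m:ℤ) - (ν : ℤ)) / N))) * (σ2:ℂ)
            else 0 := by
          intro q
          rw [map_smul, smul_eq_mul, h p q]
          split <;> simp
        rw [Finset.sum_congr rfl fun q _ => hq q,
          Finset.sum_ite_eq (Finset.univ) p, if_pos (Finset.mem_univ p)]
        have hexp : Complex.exp (2 * Real.pi * Complex.I * p * (((n:ℕ):ℤ) - ((ν:ℕ):ℤ) : ℂ) / N) *
            Complex.exp (2 * Real.pi * Complex.I * p * (((m:ℤ):ℂ) - ((ν:ℤ):ℂ)) / N) = 1 := by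
          refine exp_pair N hN p ((n:ℤ) - (ν:ℤ)) s hs _ _ ?_ ?_
          · push_cast; ring
          · rw [hm, ← hs]; push_cast; ring
        rw [hexp, mul_one, rsq N hN]
      rw [Finset.sum_congr rfl fun p _ => by rw [map_sum, hstep p]]
      rw [Finset.sum_const, Finset.card_univ, Fintype.card_fin, nsmul_eq_mul]
      have hNz : (N : ℂ) ≠ 0 := by exact_mod_cast Nat.cast_ne_zero.mpr (by omega)
      field_simp
    rw [Finset.sum_congr rfl key, Finset.sum_const, Finset.card_range, nsmul_eq_mul]
    push_cast
    ring
end
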